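/- arXiv:2209.00969 — 3 statements merged into one kernel-verified Lean document; each statement's English description precedes it below -/
import Mathlib

section
/- For c+d ∈ (0,1) and nonnegative integer T, the quantity p_T = Σ_{s=0}^∞ C(s+T,s)² (1-c-d)^{2s} (c+d)^{2(T+1)} satisfies 0 < p_T < 1. -/
/-- For c+d ∈ (0,1) and T ∈ ℕ, p_T = Σ_s C(s+T,s)² (1-c-d)^{2s} (c+d)^{2(T+1)}
satisfies 0 < p_T < 1. -/
theorem stmt8 (c d : ℝ) (hc : 0 < c) (hd : 0 < d) (hcd : c + d < 1) (T : ℕ) :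
    0 < (∑' s : ℕ, (((s + T).choose s : ℝ)) ^ 2 * (1 - c - d) ^ (2 * s)
          * (c + d) ^ (2 * (T + 1))) ∧
    (∑' s : ℕ, (((s + T).choose s : ℝ)) ^ 2 * (1 - c - d) ^ (2 * s)
          * (c + d) ^ (2 * (T + 1))) < 1 := by
  set x : ℝ := 1 - c - d with hx
  set y : ℝ := c + d with hy
  have hx0 : 0 < x := by simp [hx, hy]; linarith
  have hx1 : x < 1 := by simp [hx]; linarith
  have hy0 : 0 < y := by positivity
  have hy1 : y < 1 := hcd
  have hxy : 1 - x = y := by simp [hx, hy]; ring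
  -- the sequence a s = C(s+T,T) x^s y^(T+1)
  set a : ℕ → ℝ := fun s => ((s + T).choose T : ℝ) * x ^ s * y ^ (T + 1) with ha
  have hxnorm : ‖x‖ < 1 := by rw [Real.norm_eq_abs, abs_of_pos hx0]; exact hx1
  have hsum1 : HasSum a 1 := by
    have h := (hasSum_choose_mul_geometric_of_norm_lt_one T hxnorm).mul_right (y ^ (T + 1))
    rw [hxy] at h
    convert h using 1
    · rfl
    · rw [one_div, inv_mul_cancel₀ (by positivity)]
  have hanonneg : ∀ s, 0 ≤ a s := by
    intro s; positivity
  have hale1 : ∀ s, a s ≤ 1 := by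
    intro s
    exact le_hasSum hsum1 s (fun j _ => hanonneg j)
  have hterm : ∀ s : ℕ, (((s + T).choose s : ℝ)) ^ 2 * x ^ (2 * s) * y ^ (2 * (T + 1))
      = (a s) ^ 2 := by
    intro s
    have hchoose : (s + T).choose s = (s + T).choose T := by
      have := Nat.choose_symm (Nat.le_add_right s T)
      simpa using this.symm
    rw [ha]
    simp only [hchoose]
    ring
  have hsq_nonneg : ∀ s, 0 ≤ (a s) ^ 2 := fun s => sq_nonneg _
  have hsq_le : ∀ s, (a s) ^ 2 ≤ a s := by
    intro s
    nlinarith [hanonneg s, hale1 s]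
  have hsummable_sq : Summable (fun s => (a s) ^ 2) :=
    Summable.of_nonneg_of_le hsq_nonneg hsq_le hsum1.summable
  have ha0 : a 0 = y ^ (T + 1) := by simp [ha]
  have ha0lt : a 0 < 1 := by
    rw [ha0]
    exact pow_lt_one₀ hy0.le hy1 (Nat.succ_ne_zero T)
  have ha0pos : 0 < a 0 := by rw [ha0]; positivity
  have hstrict : (a 0) ^ 2 < a 0 := by nlinarith
  constructor
  · calc (0:ℝ) < (a 0) ^ 2 := by positivity
      _ ≤ ∑' s, (a s) ^ 2 := hsummable_sq.le_tsum 0 (fun j _ => hsq_nonneg j)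
      _ = _ := by rw [tsum_congr hterm]
  · calc (∑' s : ℕ, (((s + T).choose s : ℝ)) ^ 2 * x ^ (2 * s) * y ^ (2 * (T + 1)))
        = ∑' s, (a s) ^ 2 := tsum_congr hterm
      _ < ∑' s, a s := Summable.tsum_lt_tsum hsq_le hstrict hsummable_sq hsum1.summable
      _ = 1 := hsum1.tsum_eq
end

section
/- Let R satisfy the distributional fixed-point equation R =_d Σ_{i=1}^{N} C_i R_i + d Z, where the R_i are i.i.d. copies of R with values in [-1,1], independent of (N, Z, C_1,...,C_N), Σ_{i=1}^N C_i = c almost surely with N ≥ 1, c + d = 1, d > 0, and Z ∈ [-1,1] with Z independent of the R_i. Then E[R] = E[Z] and, setting ρ₂ = E[Σ_{i=1}^N C_i²] < 1 and assuming Z is independent of (N, C_1,...,C_N), Var(R) = d² Var(Z)/(1-ρ₂). -/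
open MeasureTheory ProbabilityTheory Finset
open Filter Topology

/-- For a [-1,1]-valued solution of the distributional fixed-point equation
R =_d Σ_{i=1}^N C_i R_i + dZ with Σ C_i = c, N ≥ 1, c+d = 1, d > 0, the R_i i.i.d.
copies of R independent of (N,Z,C) and Z independent of (N,C):
E[R] = E[Z] and Var(R) = d² Var(Z)/(1-ρ₂) with ρ₂ = E[Σ C_i²] < 1. -/
theorem stmt13 {Ω : Type*} [MeasurableSpace Ω] (μ : Measure Ω) [IsProbabilityMeasure μ]
    (c d : ℝ) (hd : 0 < d) (hcd : c + d = 1)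
    (N : Ω → ℕ) (C : ℕ → Ω → ℝ) (Z : Ω → ℝ) (R : ℕ → Ω → ℝ)
    (hNmeas : Measurable N) (hCmeas : ∀ i, Measurable (C i))
    (hZmeas : Measurable Z) (hRmeas : ∀ i, Measurable (R i))
    (hN1 : ∀ ω, 1 ≤ N ω) (hCpos : ∀ i ω, 0 ≤ C i ω)
    (hCsum : ∀ ω, ∑ i ∈ Finset.range (N ω), C i ω = c)
    (hZbd : ∀ ω, Z ω ∈ Set.Icc (-1 : ℝ) 1)
    (hRbd : ∀ i ω, R i ω ∈ Set.Icc (-1 : ℝ) 1)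
    (hident : ∀ i, Measure.map (R i) μ = Measure.map (R 0) μ)
    (hindep : iIndepFun R μ)
    (hindep2 : IndepFun (fun ω i => R i ω) (fun ω => (N ω, Z ω, fun i => C i ω)) μ)
    (hZindep : IndepFun Z (fun ω => (N ω, fun i => C i ω)) μ)
    (hfix : Measure.map (fun ω => ∑ i ∈ Finset.range (N ω), C i ω * R i ω + d * Z ω) μ
      = Measure.map (R 0) μ)
    (ρ₂ : ℝ) (hρ₂def : ρ₂ = ∫ ω, ∑ i ∈ Finset.range (N ω), (C i ω) ^ 2 ∂μ)
    (hρ₂lt : ρ₂ < 1) :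
    (∫ ω, R 0 ω ∂μ = ∫ ω, Z ω ∂μ) ∧
    variance (R 0) μ = d ^ 2 * variance Z μ / (1 - ρ₂) := by
  obtain ⟨ω₀⟩ : Nonempty Ω := by
    by_contra h
    rw [not_nonempty_iff] at h
    have h2 := measure_univ (μ := μ)
    rw [Set.univ_eq_empty_iff.2 h, measure_empty] at h2
    simp at h2
  have hc0 : 0 ≤ c := (hCsum ω₀) ▸ Finset.sum_nonneg fun i _ => hCpos i ω₀
  have hc1 : c ≤ 1 := by linarith
  -- bounded measurable functions are integrable
  have bint : ∀ (f : Ω → ℝ), Measurable f → ∀ K : ℝ, (∀ ω, |f ω| ≤ K) → Integrable f μ :=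
    fun f hf K h => (integrable_const K).mono' hf.aestronglyMeasurable (Eventually.of_forall h)
  set m := ∫ ω, R 0 ω ∂μ with hm
  set q := ∫ ω, (R 0 ω) ^ 2 ∂μ with hq
  set z1 := ∫ ω, Z ω ∂μ with hz1
  set z2 := ∫ ω, (Z ω) ^ 2 ∂μ with hz2
  -- identical distribution consequences
  have hR1 : ∀ i, ∫ ω, R i ω ∂μ = m := by
    intro i
    have h1 := integral_map (f := fun x : ℝ => x) (hRmeas i).aemeasurable
      measurable_id.aestronglyMeasurable (μ := μ)
    have h2 := integral_map (f := fun x : ℝ => x) (hRmeas 0).aemeasurable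
      measurable_id.aestronglyMeasurable (μ := μ)
    rw [hm, ← h1, hident i, h2]
  have hR2 : ∀ i, ∫ ω, (R i ω) ^ 2 ∂μ = q := by
    intro i
    have h1 := integral_map (f := fun x : ℝ => x ^ 2) (hRmeas i).aemeasurable
      (measurable_id.pow_const 2).aestronglyMeasurable (μ := μ)
    have h2 := integral_map (f := fun x : ℝ => x ^ 2) (hRmeas 0).aemeasurable
      (measurable_id.pow_const 2).aestronglyMeasurable (μ := μ)
    rw [hq, ← h1, hident i, h2]
  have hRij : ∀ i j, i ≠ j → ∫ ω, R i ω * R j ω ∂μ = m * m := by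
    intro i j hij
    have h := (hindep.indepFun hij).integral_mul_eq_mul_integral (hRmeas i).aestronglyMeasurable
      (hRmeas j).aestronglyMeasurable
    simp only [Pi.mul_apply] at h
    rw [h, hR1 i, hR1 j]
  -- the truncated weights
  set E : ℕ → Ω → ℝ := fun i ω => if i < N ω then C i ω else 0 with hE
  have hEmeas : ∀ i, Measurable (E i) := fun i =>
    Measurable.ite (measurableSet_lt measurable_const hNmeas) (hCmeas i) measurable_const
  have hE0 : ∀ i ω, 0 ≤ E i ω := by
    intro i ω; rw [hE]; dsimp only
    split
    · exact hCpos i ω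
    · exact le_refl _
  have hEc : ∀ i ω, E i ω ≤ c := by
    intro i ω; rw [hE]; dsimp only
    split
    · rename_i h
      rw [← hCsum ω]
      exact Finset.single_le_sum (fun j _ => hCpos j ω) (Finset.mem_range.2 h)
    · exact hc0
  have hEsum_le : ∀ n ω, ∑ i ∈ range n, E i ω ≤ c := by
    intro n ω
    rw [← hCsum ω]
    rw [hE]; dsimp only
    rw [Finset.sum_ite, Finset.sum_const_zero, add_zero]
    refine Finset.sum_le_sum_of_subset_of_nonneg ?_ fun j hj _ => hCpos j ω
    intro i hi
    simp only [Finset.mem_filter, Finset.mem_range] at hi ⊢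
    exact hi.2
  have hEsum_nn : ∀ n ω, 0 ≤ ∑ i ∈ range n, E i ω :=
    fun n ω => Finset.sum_nonneg fun i _ => hE0 i ω
  -- truncation identity
  have hsumX : ∀ (X : ℕ → Ω → ℝ) ω n, N ω ≤ n →
      ∑ i ∈ range n, E i ω * X i ω = ∑ i ∈ range (N ω), C i ω * X i ω := by
    intro X ω n hn
    rw [← Finset.sum_subset (Finset.range_subset_range.2 hn) ?_]
    · exact Finset.sum_congr rfl fun i hi => by
        rw [hE]; dsimp only; rw [if_pos (Finset.mem_range.1 hi)]
    · intro i hi hni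
      rw [hE]; dsimp only
      rw [if_neg (fun h => hni (Finset.mem_range.2 h)), zero_mul]
  -- independence machinery
  have hAmeas : Measurable (fun ω i => R i ω) := measurable_pi_lambda _ hRmeas
  have hWmeas : Measurable (fun ω => (N ω, Z ω, fun i => C i ω)) :=
    hNmeas.prodMk (hZmeas.prodMk (measurable_pi_lambda _ hCmeas))
  have key : ∀ (g : ℕ × ℝ × (ℕ → ℝ) → ℝ), Measurable g → ∀ (h : (ℕ → ℝ) → ℝ), Measurable h →
      ∀ (u v : Ω → ℝ), (∀ ω, u ω = g (N ω, Z ω, fun i => C i ω)) →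
      (∀ ω, v ω = h (fun i => R i ω)) →
      ∫ ω, u ω * v ω ∂μ = (∫ ω, u ω ∂μ) * ∫ ω, v ω ∂μ := by
    intro g hg h hh u v hu hv
    have hu' : u = fun ω => g (N ω, Z ω, fun i => C i ω) := funext hu
    have hv' : v = fun ω => h (fun i => R i ω) := funext hv
    rw [hu', hv']
    exact (hindep2.symm.comp hg hh).integral_mul_eq_mul_integral
      (hg.comp hWmeas).aestronglyMeasurable (hh.comp hAmeas).aestronglyMeasurable
  -- measurability of the g's
  have hgE : ∀ i : ℕ, Measurable (fun p : ℕ × ℝ × (ℕ → ℝ) => if i < p.1 then p.2.2 i else 0) :=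
    fun i => Measurable.ite (measurableSet_lt measurable_const measurable_fst)
      ((measurable_pi_apply i).comp (measurable_snd.comp measurable_snd)) measurable_const
  have hEg : ∀ i ω, E i ω =
      (fun p : ℕ × ℝ × (ℕ → ℝ) => if i < p.1 then p.2.2 i else 0) (N ω, Z ω, fun j => C j ω) :=
    fun i ω => rfl
  -- first moment terms
  have tA : ∀ i, ∫ ω, E i ω * R i ω ∂μ = (∫ ω, E i ω ∂μ) * m := by
    intro i
    rw [key _ (hgE i) (fun a => a i) (measurable_pi_apply i) (E i) (R i) (hEg i)
      (fun ω => rfl), hR1 i]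
  -- cross terms with Z
  have tB : ∀ i, ∫ ω, (Z ω * E i ω) * R i ω ∂μ = (∫ ω, Z ω * E i ω ∂μ) * m := by
    intro i
    rw [key (fun p => p.2.1 * (if i < p.1 then p.2.2 i else 0))
      ((measurable_fst.comp measurable_snd).mul (hgE i)) (fun a => a i)
      (measurable_pi_apply i) (fun ω => Z ω * E i ω) (R i) (fun ω => rfl) (fun ω => rfl), hR1 i]
  -- second moment terms
  have tC : ∀ i j, ∫ ω, (E i ω * E j ω) * (R i ω * R j ω) ∂μ
      = (∫ ω, E i ω * E j ω ∂μ) * (if i = j then q else m * m) := by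
    intro i j
    have hg2 : Measurable (fun p : ℕ × ℝ × (ℕ → ℝ) =>
        (if i < p.1 then p.2.2 i else 0) * (if j < p.1 then p.2.2 j else 0)) :=
      (hgE i).mul (hgE j)
    have hh2 : Measurable (fun a : ℕ → ℝ => a i * a j) :=
      (measurable_pi_apply i).mul (measurable_pi_apply j)
    rw [key _ hg2 (fun a => a i * a j) hh2 (fun ω => E i ω * E j ω)
      (fun ω => R i ω * R j ω) (fun ω => rfl) (fun ω => rfl)]
    congr 1
    by_cases hij : i = j
    · subst hij
      rw [if_pos rfl, ← hR2 i]
      exact integral_congr_ae (Eventually.of_forall fun ω => by ring)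
    · rw [if_neg hij]
      exact hRij i j hij
  -- pointwise bounds
  have hRb : ∀ i ω, |R i ω| ≤ 1 := fun i ω => abs_le.2 ⟨(hRbd i ω).1, (hRbd i ω).2⟩
  have hZb : ∀ ω, |Z ω| ≤ 1 := fun ω => abs_le.2 ⟨(hZbd ω).1, (hZbd ω).2⟩
  have hEb : ∀ i ω, |E i ω| ≤ 1 := fun i ω => by
    rw [abs_of_nonneg (hE0 i ω)]; exact le_trans (hEc i ω) hc1
  have mul_bd : ∀ x y : ℝ, |x| ≤ 1 → |y| ≤ 1 → |x * y| ≤ 1 := by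
    intro x y hx hy
    rw [abs_mul]
    exact mul_le_one₀ hx (abs_nonneg y) hy
  -- integrability facts
  have intE : ∀ i, Integrable (E i) μ := fun i => bint _ (hEmeas i) 1 (hEb i)
  have intER : ∀ i, Integrable (fun ω => E i ω * R i ω) μ := fun i =>
    bint _ ((hEmeas i).mul (hRmeas i)) 1 fun ω => mul_bd _ _ (hEb i ω) (hRb i ω)
  have intZE : ∀ i, Integrable (fun ω => Z ω * E i ω) μ := fun i =>
    bint _ (hZmeas.mul (hEmeas i)) 1 fun ω => mul_bd _ _ (hZb ω) (hEb i ω)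
  have intZER : ∀ i, Integrable (fun ω => (Z ω * E i ω) * R i ω) μ := fun i =>
    bint _ ((hZmeas.mul (hEmeas i)).mul (hRmeas i)) 1 fun ω =>
      mul_bd _ _ (mul_bd _ _ (hZb ω) (hEb i ω)) (hRb i ω)
  have intEE : ∀ i j, Integrable (fun ω => E i ω * E j ω) μ := fun i j =>
    bint _ ((hEmeas i).mul (hEmeas j)) 1 fun ω => mul_bd _ _ (hEb i ω) (hEb j ω)
  have intEERR : ∀ i j, Integrable (fun ω => (E i ω * E j ω) * (R i ω * R j ω)) μ := fun i j =>
    bint _ (((hEmeas i).mul (hEmeas j)).mul ((hRmeas i).mul (hRmeas j))) 1 fun ω =>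
      mul_bd _ _ (mul_bd _ _ (hEb i ω) (hEb j ω)) (mul_bd _ _ (hRb i ω) (hRb j ω))
  have intE2 : ∀ i, Integrable (fun ω => (E i ω)^2) μ := fun i =>
    bint _ ((hEmeas i).pow_const 2) 1 fun ω => by
      rw [sq, abs_mul]; exact mul_le_one₀ (hEb i ω) (abs_nonneg _) (hEb i ω)
  -- finite-n first moment
  have I1 : ∀ n, ∫ ω, ∑ i ∈ range n, E i ω * R i ω ∂μ
      = (∫ ω, ∑ i ∈ range n, E i ω ∂μ) * m := by
    intro n
    rw [integral_finset_sum _ (fun i _ => intER i), integral_finset_sum _ (fun i _ => intE i),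
      Finset.sum_mul]
    exact Finset.sum_congr rfl fun i _ => tA i
  -- finite-n cross moment
  have I2 : ∀ n, ∫ ω, Z ω * (∑ i ∈ range n, E i ω * R i ω) ∂μ
      = z1 * (∫ ω, ∑ i ∈ range n, E i ω ∂μ) * m := by
    intro n
    have e1 : ∀ ω, Z ω * (∑ i ∈ range n, E i ω * R i ω)
        = ∑ i ∈ range n, (Z ω * E i ω) * R i ω := by
      intro ω; rw [Finset.mul_sum]; exact Finset.sum_congr rfl fun i _ => by ring
    rw [integral_congr_ae (Eventually.of_forall e1),
      integral_finset_sum _ (fun i _ => intZER i),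
      Finset.sum_congr rfl (fun i _ => tB i), ← Finset.sum_mul,
      ← integral_finset_sum _ (fun i _ => intZE i)]
    have e2 : ∀ ω, ∑ i ∈ range n, Z ω * E i ω = Z ω * ∑ i ∈ range n, E i ω := by
      intro ω; rw [Finset.mul_sum]
    rw [integral_congr_ae (Eventually.of_forall e2)]
    congr 1
    -- use independence of Z from (N, C)
    have hhn : Measurable (fun p : ℕ × (ℕ → ℝ) => ∑ i ∈ range n, if i < p.1 then p.2 i else 0) :=
      Finset.measurable_sum _ fun i _ =>
        Measurable.ite (measurableSet_lt measurable_const measurable_fst)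
          ((measurable_pi_apply i).comp measurable_snd) measurable_const
    have hpairmeas : Measurable (fun ω => (N ω, fun i => C i ω)) :=
      hNmeas.prodMk (measurable_pi_lambda _ hCmeas)
    have hzi := (hZindep.comp measurable_id hhn).integral_mul_eq_mul_integral hZmeas.aestronglyMeasurable
      (hhn.comp hpairmeas).aestronglyMeasurable
    simp only [Function.id_comp] at hzi
    have e3 : (fun ω => Z ω * ∑ i ∈ range n, E i ω)
        = Z * ((fun p : ℕ × (ℕ → ℝ) => ∑ i ∈ range n, if i < p.1 then p.2 i else 0) ∘
            (fun ω => (N ω, fun i => C i ω))) := rfl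
    rw [e3, hzi]
    rfl
  -- finite-n second moment
  have I3 : ∀ n, ∫ ω, (∑ i ∈ range n, E i ω * R i ω)^2 ∂μ
      = q * (∫ ω, ∑ i ∈ range n, (E i ω)^2 ∂μ)
        + m^2 * ((∫ ω, (∑ i ∈ range n, E i ω)^2 ∂μ)
          - ∫ ω, ∑ i ∈ range n, (E i ω)^2 ∂μ) := by
    intro n
    have e1 : ∀ ω, (∑ i ∈ range n, E i ω * R i ω)^2
        = ∑ i ∈ range n, ∑ j ∈ range n, (E i ω * E j ω) * (R i ω * R j ω) := by
      intro ω
      rw [sq, Finset.sum_mul_sum]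
      exact Finset.sum_congr rfl fun i _ => Finset.sum_congr rfl fun j _ => by ring
    rw [integral_congr_ae (Eventually.of_forall e1),
      integral_finset_sum _ (fun i _ => integrable_finset_sum _ (fun j _ => intEERR i j)),
      Finset.sum_congr rfl (fun i (hi : i ∈ range n) => by
        rw [integral_finset_sum _ (fun j _ => intEERR i j),
          Finset.sum_congr rfl (fun j _ => tC i j)])]
    -- rearrange the double sum
    have e3 : ∀ i ∈ range n,
        ∑ j ∈ range n, (∫ ω, E i ω * E j ω ∂μ) * (if i = j then q else m * m)
        = (∑ j ∈ range n, ∫ ω, E i ω * E j ω ∂μ) * m^2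
          + (∫ ω, E i ω * E i ω ∂μ) * (q - m^2) := by
      intro i hi
      have e4 : ∀ j ∈ range n,
          (∫ ω, E i ω * E j ω ∂μ) * (if i = j then q else m * m)
          = (∫ ω, E i ω * E j ω ∂μ) * m^2
            + (if j = i then (∫ ω, E i ω * E i ω ∂μ) * (q - m^2) else 0) := by
        intro j _
        by_cases h : i = j
        · subst h
          rw [if_pos rfl, if_pos rfl]
          ring
        · rw [if_neg h, if_neg (Ne.symm h), add_zero, sq]
      rw [Finset.sum_congr rfl e4, Finset.sum_add_distrib, ← Finset.sum_mul,
        Finset.sum_ite_eq' (range n) i (fun _ => (∫ ω, E i ω * E i ω ∂μ) * (q - m^2)),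
        if_pos hi]
    -- identify the two sums with integrals
    have hw1 : ∫ ω, (∑ i ∈ range n, E i ω)^2 ∂μ
        = ∑ i ∈ range n, ∑ j ∈ range n, ∫ ω, E i ω * E j ω ∂μ := by
      have e : ∀ ω, (∑ i ∈ range n, E i ω)^2 = ∑ i ∈ range n, ∑ j ∈ range n, E i ω * E j ω := by
        intro ω; rw [sq, Finset.sum_mul_sum]
      rw [integral_congr_ae (Eventually.of_forall e),
        integral_finset_sum _ (fun i _ => integrable_finset_sum _ (fun j _ => intEE i j))]
      exact Finset.sum_congr rfl fun i _ => integral_finset_sum _ (fun j _ => intEE i j)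
    have hw2 : ∫ ω, ∑ i ∈ range n, (E i ω)^2 ∂μ = ∑ i ∈ range n, ∫ ω, E i ω * E i ω ∂μ := by
      have e : ∀ ω, ∑ i ∈ range n, (E i ω)^2 = ∑ i ∈ range n, E i ω * E i ω := by
        intro ω; exact Finset.sum_congr rfl fun i _ => sq (E i ω)
      rw [integral_congr_ae (Eventually.of_forall e), integral_finset_sum _ (fun i _ => intEE i i)]
    rw [Finset.sum_congr rfl e3, Finset.sum_add_distrib, ← Finset.sum_mul, ← Finset.sum_mul, hw1, hw2]
    ring
  -- the limit random variable
  set S : Ω → ℝ := fun ω => ∑ i ∈ range (N ω), C i ω * R i ω with hS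
  have hSfin_meas : ∀ n, Measurable (fun ω => ∑ i ∈ range n, E i ω * R i ω) :=
    fun n => Finset.measurable_sum _ fun i _ => (hEmeas i).mul (hRmeas i)
  have hSfin_tend : ∀ ω, Tendsto (fun n => ∑ i ∈ range n, E i ω * R i ω) atTop (𝓝 (S ω)) := by
    intro ω
    have h : ∀ᶠ n in atTop, (fun _ => S ω) n = ∑ i ∈ range n, E i ω * R i ω :=
      eventually_atTop.2 ⟨N ω, fun n hn => by rw [hsumX R ω n hn, hS]⟩
    exact Tendsto.congr' h tendsto_const_nhds
  have hSmeas : Measurable S :=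
    measurable_of_tendsto_metrizable hSfin_meas (tendsto_pi_nhds.2 hSfin_tend)
  have hSc : ∀ ω, |S ω| ≤ c := by
    intro ω
    rw [hS]
    calc |∑ i ∈ range (N ω), C i ω * R i ω| ≤ ∑ i ∈ range (N ω), |C i ω * R i ω| :=
          Finset.abs_sum_le_sum_abs _ _
      _ ≤ ∑ i ∈ range (N ω), C i ω := Finset.sum_le_sum fun i _ => by
          rw [abs_mul, abs_of_nonneg (hCpos i ω)]
          exact mul_le_of_le_one_right (hCpos i ω) (hRb i ω)
      _ = c := hCsum ω
  have hSb : ∀ ω, |S ω| ≤ 1 := fun ω => le_trans (hSc ω) hc1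
  have hSfinb : ∀ n ω, |∑ i ∈ range n, E i ω * R i ω| ≤ 1 := by
    intro n ω
    calc |∑ i ∈ range n, E i ω * R i ω| ≤ ∑ i ∈ range n, |E i ω * R i ω| :=
          Finset.abs_sum_le_sum_abs _ _
      _ ≤ ∑ i ∈ range n, E i ω := Finset.sum_le_sum fun i _ => by
          rw [abs_mul, abs_of_nonneg (hE0 i ω)]
          exact mul_le_of_le_one_right (hE0 i ω) (hRb i ω)
      _ ≤ c := hEsum_le n ω
      _ ≤ 1 := hc1
  -- truncated sums of weights converge
  have hsum1 : ∀ ω n, N ω ≤ n → ∑ i ∈ range n, E i ω = c := by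
    intro ω n hn
    have h := hsumX (fun _ _ => 1) ω n hn
    simpa [hCsum ω] using h
  have hsum2 : ∀ ω n, N ω ≤ n → ∑ i ∈ range n, (E i ω)^2 = ∑ i ∈ range (N ω), (C i ω)^2 := by
    intro ω n hn
    have h := hsumX E ω n hn
    calc ∑ i ∈ range n, (E i ω)^2 = ∑ i ∈ range n, E i ω * E i ω :=
          Finset.sum_congr rfl fun i _ => sq (E i ω)
      _ = ∑ i ∈ range (N ω), C i ω * E i ω := h
      _ = ∑ i ∈ range (N ω), (C i ω)^2 := Finset.sum_congr rfl fun i hi => by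
          rw [hE]; dsimp only; rw [if_pos (Finset.mem_range.1 hi), sq]
  -- dominated convergence limits
  have limD : Tendsto (fun n => ∫ ω, ∑ i ∈ range n, E i ω ∂μ) atTop (𝓝 c) := by
    have h := tendsto_integral_of_dominated_convergence (μ := μ)
      (F := fun n ω => ∑ i ∈ range n, E i ω) (f := fun _ => c) (bound := fun _ => 1)
      (fun n => (Finset.measurable_sum _ fun i _ => hEmeas i).aestronglyMeasurable)
      (integrable_const 1)
      (fun n => Eventually.of_forall fun ω => by
        rw [Real.norm_eq_abs, abs_of_nonneg (hEsum_nn n ω)]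
        exact le_trans (hEsum_le n ω) hc1)
      (Eventually.of_forall fun ω => by
        have h : ∀ᶠ n in atTop, (fun _ => c) n = ∑ i ∈ range n, E i ω :=
          eventually_atTop.2 ⟨N ω, fun n hn => (hsum1 ω n hn).symm⟩
        exact Tendsto.congr' h tendsto_const_nhds)
    simpa using h
  have limQ : Tendsto (fun n => ∫ ω, ∑ i ∈ range n, (E i ω)^2 ∂μ) atTop (𝓝 ρ₂) := by
    rw [hρ₂def]
    refine tendsto_integral_of_dominated_convergence (μ := μ)
      (F := fun n ω => ∑ i ∈ range n, (E i ω)^2)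
      (f := fun ω => ∑ i ∈ range (N ω), (C i ω)^2) (bound := fun _ => 1)
      (fun n => (Finset.measurable_sum _ fun i _ => (hEmeas i).pow_const 2).aestronglyMeasurable)
      (integrable_const 1)
      (fun n => Eventually.of_forall fun ω => by
        rw [Real.norm_eq_abs, abs_of_nonneg (Finset.sum_nonneg fun i _ => sq_nonneg _)]
        calc ∑ i ∈ range n, (E i ω)^2 ≤ ∑ i ∈ range n, E i ω :=
              Finset.sum_le_sum fun i _ => by
                rw [sq]
                exact mul_le_of_le_one_right (hE0 i ω) (le_trans (hEc i ω) hc1)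
          _ ≤ c := hEsum_le n ω
          _ ≤ 1 := hc1)
      (Eventually.of_forall fun ω => by
        have h : ∀ᶠ n in atTop,
            (fun _ => ∑ i ∈ range (N ω), (C i ω)^2) n = ∑ i ∈ range n, (E i ω)^2 :=
          eventually_atTop.2 ⟨N ω, fun n hn => (hsum2 ω n hn).symm⟩
        exact Tendsto.congr' h tendsto_const_nhds)
  have limD2 : Tendsto (fun n => ∫ ω, (∑ i ∈ range n, E i ω)^2 ∂μ) atTop (𝓝 (c^2)) := by
    have h := tendsto_integral_of_dominated_convergence (μ := μ)
      (F := fun n ω => (∑ i ∈ range n, E i ω)^2) (f := fun _ => c^2) (bound := fun _ => 1)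
      (fun n => ((Finset.measurable_sum _ fun i _ => hEmeas i).pow_const 2).aestronglyMeasurable)
      (integrable_const 1)
      (fun n => Eventually.of_forall fun ω => by
        show ‖(∑ i ∈ range n, E i ω)^2‖ ≤ (1:ℝ)
        rw [Real.norm_eq_abs, abs_of_nonneg (sq_nonneg _)]
        have h1 := mul_le_mul (hEsum_le n ω) (hEsum_le n ω) (hEsum_nn n ω) hc0
        nlinarith [h1, hc0, hc1])
      (Eventually.of_forall fun ω => by
        have h : ∀ᶠ n in atTop, (fun _ => c^2) n = (∑ i ∈ range n, E i ω)^2 :=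
          eventually_atTop.2 ⟨N ω, fun n hn => by rw [hsum1 ω n hn]⟩
        exact Tendsto.congr' h tendsto_const_nhds)
    simpa using h
  have limS1 : Tendsto (fun n => ∫ ω, ∑ i ∈ range n, E i ω * R i ω ∂μ) atTop
      (𝓝 (∫ ω, S ω ∂μ)) :=
    tendsto_integral_of_dominated_convergence (μ := μ) (bound := fun _ => 1)
      (fun n => (hSfin_meas n).aestronglyMeasurable) (integrable_const 1)
      (fun n => Eventually.of_forall fun ω => by
        rw [Real.norm_eq_abs]; exact hSfinb n ω)
      (Eventually.of_forall hSfin_tend)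
  have limS2 : Tendsto (fun n => ∫ ω, (∑ i ∈ range n, E i ω * R i ω)^2 ∂μ) atTop
      (𝓝 (∫ ω, (S ω)^2 ∂μ)) :=
    tendsto_integral_of_dominated_convergence (μ := μ) (bound := fun _ => 1)
      (fun n => ((hSfin_meas n).pow_const 2).aestronglyMeasurable) (integrable_const 1)
      (fun n => Eventually.of_forall fun ω => by
        rw [Real.norm_eq_abs, abs_pow]
        calc |∑ i ∈ range n, E i ω * R i ω| ^ 2 ≤ 1 ^ 2 := by
              have := hSfinb n ω
              nlinarith [abs_nonneg (∑ i ∈ range n, E i ω * R i ω)]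
          _ = 1 := one_pow 2)
      (Eventually.of_forall fun ω => (hSfin_tend ω).pow 2)
  have limS3 : Tendsto (fun n => ∫ ω, Z ω * (∑ i ∈ range n, E i ω * R i ω) ∂μ) atTop
      (𝓝 (∫ ω, Z ω * S ω ∂μ)) :=
    tendsto_integral_of_dominated_convergence (μ := μ) (bound := fun _ => 1)
      (fun n => (hZmeas.mul (hSfin_meas n)).aestronglyMeasurable) (integrable_const 1)
      (fun n => Eventually.of_forall fun ω => by
        rw [Real.norm_eq_abs]
        exact mul_bd _ _ (hZb ω) (hSfinb n ω))
      (Eventually.of_forall fun ω => Tendsto.const_mul (Z ω) (hSfin_tend ω))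
  -- limit identities
  have hES : ∫ ω, S ω ∂μ = c * m := by
    have h2 : Tendsto (fun n => ∫ ω, ∑ i ∈ range n, E i ω * R i ω ∂μ) atTop (𝓝 (c * m)) := by
      have h := limD.mul_const m
      simpa only [I1] using h
    exact tendsto_nhds_unique limS1 h2
  have hES2 : ∫ ω, (S ω)^2 ∂μ = q * ρ₂ + m^2 * (c^2 - ρ₂) := by
    have h2 : Tendsto (fun n => ∫ ω, (∑ i ∈ range n, E i ω * R i ω)^2 ∂μ) atTop
        (𝓝 (q * ρ₂ + m^2 * (c^2 - ρ₂))) := by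
      have h := (limQ.const_mul q).add ((limD2.sub limQ).const_mul (m^2))
      simpa only [I3] using h
    exact tendsto_nhds_unique limS2 h2
  have hES3 : ∫ ω, Z ω * S ω ∂μ = z1 * c * m := by
    have h2 : Tendsto (fun n => ∫ ω, Z ω * (∑ i ∈ range n, E i ω * R i ω) ∂μ) atTop
        (𝓝 (z1 * c * m)) := by
      have h := (limD.const_mul z1).mul_const m
      simpa only [I2] using h
    exact tendsto_nhds_unique limS3 h2
  -- the fixed-point equation
  have hTmeas : Measurable (fun ω => S ω + d * Z ω) := hSmeas.add (measurable_const.mul hZmeas)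
  have hTeq : (fun ω => S ω + d * Z ω)
      = (fun ω => ∑ i ∈ range (N ω), C i ω * R i ω + d * Z ω) := by
    funext ω; rw [hS]
  have hmT : m = ∫ ω, (S ω + d * Z ω) ∂μ := by
    have h1 := integral_map (f := fun x : ℝ => x) hTmeas.aemeasurable
      measurable_id.aestronglyMeasurable (μ := μ)
    have h2 := integral_map (f := fun x : ℝ => x) (hRmeas 0).aemeasurable
      measurable_id.aestronglyMeasurable (μ := μ)
    rw [hm, ← h2, ← hfix, ← hTeq, h1]
  have hqT : q = ∫ ω, (S ω + d * Z ω)^2 ∂μ := by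
    have h1 := integral_map (f := fun x : ℝ => x ^ 2) hTmeas.aemeasurable
      (measurable_id.pow_const 2).aestronglyMeasurable (μ := μ)
    have h2 := integral_map (f := fun x : ℝ => x ^ 2) (hRmeas 0).aemeasurable
      (measurable_id.pow_const 2).aestronglyMeasurable (μ := μ)
    rw [hq, ← h2, ← hfix, ← hTeq, h1]
  -- integrability
  have intS : Integrable S μ := bint _ hSmeas 1 hSb
  have intS2 : Integrable (fun ω => (S ω)^2) μ := bint _ (hSmeas.pow_const 2) 1 fun ω => by
    rw [abs_pow]
    calc |S ω| ^ 2 ≤ 1 ^ 2 := by nlinarith [hSb ω, abs_nonneg (S ω)]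
      _ = 1 := one_pow 2
  have intZ : Integrable Z μ := bint _ hZmeas 1 hZb
  have intZ2 : Integrable (fun ω => (Z ω)^2) μ := bint _ (hZmeas.pow_const 2) 1 fun ω => by
    rw [abs_pow]
    calc |Z ω| ^ 2 ≤ 1 ^ 2 := by nlinarith [hZb ω, abs_nonneg (Z ω)]
      _ = 1 := one_pow 2
  have intZS : Integrable (fun ω => Z ω * S ω) μ :=
    bint _ (hZmeas.mul hSmeas) 1 fun ω => mul_bd _ _ (hZb ω) (hSb ω)
  -- first moment equation
  have hEq1 : m = c * m + d * z1 := by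
    have hsplit : ∫ ω, (S ω + d * Z ω) ∂μ = c * m + d * z1 := by
      rw [integral_add intS (intZ.const_mul d), integral_const_mul, hES, hz1]
    exact hmT.trans hsplit
  -- second moment equation
  have hEq2 : q = (q * ρ₂ + m^2 * (c^2 - ρ₂)) + (2 * d * (z1 * c * m) + d^2 * z2) := by
    have e : ∀ ω, (S ω + d * Z ω)^2
        = (S ω)^2 + ((2*d) * (Z ω * S ω) + d^2 * (Z ω)^2) := fun ω => by ring
    have intB1 : Integrable (fun ω => 2*d*(Z ω * S ω)) μ := intZS.const_mul (2*d)
    have intB2 : Integrable (fun ω => d^2*(Z ω)^2) μ := intZ2.const_mul (d^2)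
    have intB : Integrable (fun ω => 2*d*(Z ω * S ω) + d^2*(Z ω)^2) μ := intB1.add intB2
    have hsplit2 : ∫ ω, (S ω + d * Z ω)^2 ∂μ
        = (q * ρ₂ + m^2 * (c^2 - ρ₂)) + (2 * d * (z1 * c * m) + d^2 * z2) := by
      rw [integral_congr_ae (Eventually.of_forall e), integral_add intS2 intB,
        integral_add intB1 intB2, integral_const_mul, integral_const_mul, hES2, hES3, hz2]
    exact hqT.trans hsplit2
  -- E[R] = E[Z]
  have hmz : m = z1 := by
    have h : d * m = d * z1 := by linear_combination hEq1 + m * hcd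
    exact mul_left_cancel₀ hd.ne' h
  -- variances
  have hmemR : MemLp (R 0) 2 μ := MemLp.of_bound (hRmeas 0).aestronglyMeasurable 1
    (Eventually.of_forall fun ω => by rw [Real.norm_eq_abs]; exact hRb 0 ω)
  have hmemZ : MemLp Z 2 μ := MemLp.of_bound hZmeas.aestronglyMeasurable 1
    (Eventually.of_forall fun ω => by rw [Real.norm_eq_abs]; exact hZb ω)
  have hVR : variance (R 0) μ = q - m ^ 2 := by
    rw [variance_eq_sub hmemR, hm, hq]
    simp [Pi.pow_apply]
  have hVZ : variance Z μ = z2 - z1 ^ 2 := by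
    rw [variance_eq_sub hmemZ, hz1, hz2]
    simp [Pi.pow_apply]
  have hρne : (1:ℝ) - ρ₂ ≠ 0 := by linarith
  refine ⟨hmz, ?_⟩
  rw [hVR, hVZ, eq_div_iff hρne, ← hmz]
  rw [← hmz] at hEq2
  linear_combination hEq2 + m^2 * (c + d + 1) * hcd
end

section
/- Let X_k = Σ_{s=1}^{k-T} Σ_{l=1}^s a_{l+T,s+T} ρ₁^{l-1} · 1(T < k), where a_{l,s} = C(s,l)(1-c-d)^{s-l}, T ≥ 0 is a fixed integer, ρ₁ ∈ [0, c+d), and c+d ∈ (0,1). Then (X_k)_{k ≥ T+1} is nonnegative and monotone increasing in k, and lim_{k→∞} X_k = 1/((c+d)^{T+2}(1 - ρ₁/(c+d))). -/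
open Filter Finset

/-- X_k = Σ_{s=1}^{k-T} Σ_{l=1}^s a_{l+T,s+T} ρ₁^{l-1} 1(T < k), with
a_{l+T,s+T} = C(s+T,s-l)(1-c-d)^{s-l}, is nonnegative, monotone increasing, and
converges to 1/((c+d)^{T+2}(1-ρ₁/(c+d))). -/
theorem stmt19 (c d ρ₁ : ℝ) (hc : 0 < c) (hd : 0 < d) (hcd : c + d < 1)
    (hρ0 : 0 ≤ ρ₁) (hρ : ρ₁ < c + d) (T : ℕ)
    (X : ℕ → ℝ)
    (hX : ∀ k, X k = if T < k then
        ∑ s ∈ Finset.Icc 1 (k - T), ∑ l ∈ Finset.Icc 1 s,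
          ((s + T).choose (s - l) : ℝ) * (1 - c - d) ^ (s - l) * ρ₁ ^ (l - 1)
      else 0) :
    (∀ k, 0 ≤ X k) ∧ Monotone X ∧
    Filter.Tendsto X Filter.atTop
      (nhds (1 / ((c + d) ^ (T + 2) * (1 - ρ₁ / (c + d))))) := by
  set q : ℝ := 1 - c - d with hq
  set p : ℝ := c + d with hp
  have hp0 : 0 < p := by positivity
  have hq0 : 0 ≤ q := by simp [hq]; linarith
  have hq1 : q < 1 := by simp [hq]; linarith
  have h1q : 1 - q = p := by simp [hq, hp]; ring
  set f : ℕ × ℕ → ℝ := fun x =>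
    ((x.2 + (x.1 + T + 1)).choose (x.1 + T + 1) : ℝ) * q ^ x.2 * ρ₁ ^ x.1 with hf
  have hf0 : ∀ x, 0 ≤ f x := fun x => by positivity
  set G : ℕ → Finset (ℕ × ℕ) := fun N =>
    (Finset.range N ×ˢ Finset.range N).filter (fun x => x.1 + x.2 + 1 ≤ N) with hG
  have hGmem : ∀ N x, x ∈ G N ↔ x.1 + x.2 + 1 ≤ N := by
    intro N x
    simp only [hG, Finset.mem_filter, Finset.mem_product, Finset.mem_range]
    omega
  have hGmono : Monotone G := by
    intro a b hab x hx
    rw [hGmem] at *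
    omega
  -- key: X k = ∑ over G (k - T) of f
  have key : ∀ k, X k = ∑ x ∈ G (k - T), f x := by
    intro k
    rw [hX k]
    by_cases hk : T < k
    · rw [if_pos hk]
      rw [Finset.sum_sigma']
      refine Finset.sum_bij' (fun a _ => (a.2 - 1, a.1 - a.2))
        (fun x _ => (⟨x.1 + x.2 + 1, x.1 + 1⟩ : (_ : ℕ) × ℕ)) ?_ ?_ ?_ ?_ ?_
      · rintro ⟨s, l⟩ ha
        simp only [Finset.mem_sigma, Finset.mem_Icc] at ha
        rw [hGmem]
        dsimp only
        omega
      · rintro ⟨a, b⟩ hx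
        rw [hGmem] at hx
        simp only [Finset.mem_sigma, Finset.mem_Icc]
        dsimp only at hx ⊢
        omega
      · rintro ⟨s, l⟩ ha
        simp only [Finset.mem_sigma, Finset.mem_Icc] at ha
        dsimp only
        congr 1
        · omega
        · omega
      · rintro ⟨a, b⟩ hx
        dsimp only
        simp only [Prod.mk.injEq]
        omega
      · rintro ⟨s, l⟩ ha
        simp only [Finset.mem_sigma, Finset.mem_Icc] at ha
        have h1 : s - l + (l - 1 + T + 1) = s + T := by omega
        have h2 : (s + T).choose (s - l) = (s + T).choose (l - 1 + T + 1) := by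
          rw [show s - l = (s + T) - (l - 1 + T + 1) by omega,
            Nat.choose_symm (by omega)]
        simp only [hf, h1, h2]
    · rw [if_neg hk]
      have : k - T = 0 := by omega
      rw [this]
      have : G 0 = ∅ := by
        ext x; rw [hGmem]; simp
      simp [this]
  -- fiberwise HasSum
  have hfib : ∀ l : ℕ, HasSum (fun m => f (l, m)) (1 / p ^ (T + 2) * (ρ₁ / p) ^ l) := by
    intro l
    have hqnorm : ‖q‖ < 1 := by rw [Real.norm_eq_abs, abs_of_nonneg hq0]; exact hq1
    have h := (hasSum_choose_mul_geometric_of_norm_lt_one (𝕜 := ℝ)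
      (l + T + 1) hqnorm).mul_right (ρ₁ ^ l)
    rw [h1q] at h
    convert h using 1
    · rfl
    rw [div_pow, div_mul_div_comm, one_mul, show l + T + 1 + 1 = T + 2 + l by omega,
      pow_add, one_div, inv_mul_eq_div, ← pow_add, ← pow_add]
  -- outer HasSum
  set L : ℝ := 1 / (p ^ (T + 2) * (1 - ρ₁ / p)) with hL
  have hρp : ρ₁ / p < 1 := (div_lt_one hp0).2 hρ
  have hρp0 : 0 ≤ ρ₁ / p := by positivity
  have houter : HasSum (fun l => 1 / p ^ (T + 2) * (ρ₁ / p) ^ l) L := by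
    have := (hasSum_geometric_of_lt_one hρp0 hρp).mul_left (1 / p ^ (T + 2))
    convert this using 1
    · rfl
    have hpne : (p : ℝ) ^ (T + 2) ≠ 0 := by positivity
    have h2 : 1 - ρ₁ / p ≠ 0 := ne_of_gt (by linarith)
    rw [hL]
    field_simp
  -- summability of f and HasSum f L
  have hsummable : Summable f := by
    rw [summable_prod_of_nonneg hf0]
    refine ⟨fun l => (hfib l).summable, ?_⟩
    apply Summable.congr houter.summable
    intro l
    exact ((hfib l).tsum_eq).symm
  have hHasSum : HasSum f L := by
    rw [hsummable.hasSum_iff]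
    rw [Summable.tsum_prod' hsummable (fun l => (hfib l).summable)]
    rw [← houter.tsum_eq]
    exact tsum_congr fun l => (hfib l).tsum_eq
  refine ⟨?_, ?_, ?_⟩
  · intro k
    rw [key k]
    exact Finset.sum_nonneg fun x _ => hf0 x
  · intro a b hab
    rw [key a, key b]
    exact Finset.sum_le_sum_of_subset_of_nonneg (hGmono (by omega))
      (fun x _ _ => hf0 x)
  · have hGtop : Tendsto G atTop atTop :=
      tendsto_atTop_finset_of_monotone hGmono
        (fun x => ⟨x.1 + x.2 + 1, (hGmem _ x).2 le_rfl⟩)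
    have h1 : Tendsto (fun N => ∑ x ∈ G N, f x) atTop (nhds L) :=
      hHasSum.comp hGtop
    have h2 : Tendsto (fun k => ∑ x ∈ G (k - T), f x) atTop (nhds L) :=
      h1.comp (tendsto_sub_atTop_nat T)
    have : X = fun k => ∑ x ∈ G (k - T), f x := funext key
    rw [this, hL, hp]
    exact h2
end
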